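/- arXiv:1404.5218 — 3 statements merged into one kernel-verified Lean document; each statement's English description precedes it below -/
import Mathlib

section
/- Let $\pi$ be a probability density on $S \subseteq \mathbb{R}^K$ proportional to $g q$, where $q$ is a probability density positive on $S$ and the weight function $g = h/q$ satisfies $a^{-1} \le g \le a$ on $S$ for some $0 < a < \infty$. Let $\theta^{(1)}, \ldots, \theta^{(M)}$ be i.i.d. samples from $q$, let $g^J$ (for $J = J(M) \ge M$) be random approximations of $g$ satisfying $a^{-1} \le g^J \le a$ and $\sup_{\theta \in S}|g(\theta) - g^J(\theta)| \le W_{g,\epsilon} / J^{1/2-\epsilon}$ for an a.s. finite random variable $W_{g,\epsilon}$ and constant $0 < \epsilon < 1/2$. Define the self-normalized importance sampling estimator $(f, \pi^{M,J}) = \sum_{i=1}^M f(\theta^{(i)}) w^{(i),J}$ with $w^{(i),J} = g^J(\theta^{(i)}) / \sum_{j=1}^M g^J(\theta^{(j)})$. Then for every bounded $f: S \to \mathbb{R}$ there exists an a.s. finite random variable $W_{f,g,\epsilon}$, independent of $M$ and $J$, such that $|(f, \pi^{M,J}) - (f, \pi)| \le W_{f,g,\epsilon} / M^{1/2 - \epsilon}$;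 in particular $(f, \pi^{M,J}) \to (f, \pi)$ almost surely as $M \to \infty$. -/
open MeasureTheory ProbabilityTheory Filter Real

lemma my_exp_le_quad {x : ℝ} (h : |x| ≤ 1) : Real.exp x ≤ 1 + x + x ^ 2 := by
  have h0 := Real.exp_bound h (n := 2) (by norm_num)
  have h2 : ∑ m ∈ Finset.range 2, x ^ m / m.factorial = 1 + x := by
    simp [Finset.sum_range_succ]
  rw [h2] at h0
  have h4 := abs_le.1 h0
  have h5 : (|x|:ℝ) ^ 2 = x ^ 2 := sq_abs x
  have h6 : ((Nat.succ 2 : ℕ) : ℝ) / (((Nat.factorial 2 : ℕ) : ℝ) * (2:ℕ)) = 3/4 := by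
    norm_num [Nat.factorial]
  nlinarith [sq_nonneg x, h4.2]

lemma my_int_bdd {α : Type} [MeasurableSpace α] (ν : Measure α) [IsFiniteMeasure ν]
    {f : α → ℝ} (hf : Measurable f) {c : ℝ} (hc : ∀ x, |f x| ≤ c) :
    Integrable f ν :=
  (integrable_const c).mono' hf.aestronglyMeasurable
    (Filter.Eventually.of_forall fun x => by simpa [Real.norm_eq_abs] using hc x)

lemma my_mgf_le {α : Type} [MeasurableSpace α] (q : Measure α) [IsProbabilityMeasure q]
    (ψ : α → ℝ) (hψ : Measurable ψ) (B : ℝ) (hB : 0 < B) (hbd : ∀ x, |ψ x| ≤ B)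
    (h0 : ∫ x, ψ x ∂q = 0) (t : ℝ) (ht : 0 ≤ t) (htB : t * B ≤ 1) :
    ∫ x, Real.exp (t * ψ x) ∂q ≤ Real.exp (t ^ 2 * B ^ 2) := by
  have hψint : Integrable ψ q := my_int_bdd q hψ hbd
  have hpt : ∀ x, Real.exp (t * ψ x) ≤ 1 + t * ψ x + t ^ 2 * B ^ 2 := by
    intro x
    have habs : |t * ψ x| ≤ 1 := by
      rw [abs_mul, abs_of_nonneg ht]
      exact le_trans (mul_le_mul_of_nonneg_left (hbd x) ht) htB
    refine (my_exp_le_quad habs).trans ?_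
    have h7 : ψ x ^ 2 ≤ B ^ 2 := by
      rw [← sq_abs]; exact pow_le_pow_left₀ (abs_nonneg _) (hbd x) 2
    have : (t * ψ x) ^ 2 ≤ t ^ 2 * B ^ 2 := by
      rw [mul_pow]; exact mul_le_mul_of_nonneg_left h7 (sq_nonneg t)
    linarith
  have hintl : Integrable (fun x => Real.exp (t * ψ x)) q := by
    refine my_int_bdd q (hψ.const_mul t).exp (c := Real.exp 1) fun x => ?_
    rw [abs_of_nonneg (Real.exp_nonneg _)]
    refine Real.exp_le_exp.2 ?_
    have habs : |t * ψ x| ≤ 1 := by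
      rw [abs_mul, abs_of_nonneg ht]
      exact le_trans (mul_le_mul_of_nonneg_left (hbd x) ht) htB
    exact (le_abs_self _).trans habs
  have hintr : Integrable (fun x => 1 + t * ψ x + t ^ 2 * B ^ 2) q := by
    exact ((integrable_const 1).add (hψint.const_mul t)).add (integrable_const _)
  calc ∫ x, Real.exp (t * ψ x) ∂q ≤ ∫ x, (1 + t * ψ x + t ^ 2 * B ^ 2) ∂q :=
        integral_mono hintl hintr hpt
    _ = 1 + t ^ 2 * B ^ 2 := by
        have he : (fun x => 1 + t * ψ x + t ^ 2 * B ^ 2)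
            = fun x => (1 + t ^ 2 * B ^ 2) + t * ψ x := by funext x; ring
        rw [he, integral_add (integrable_const _) (hψint.const_mul t), integral_const,
          integral_const_mul, h0]
        simp
    _ ≤ Real.exp (t ^ 2 * B ^ 2) := by
        have := Real.add_one_le_exp (t ^ 2 * B ^ 2); linarith

lemma my_onesided {α Ω : Type} [MeasurableSpace α] [MeasurableSpace Ω]
    (μ : Measure Ω) [IsProbabilityMeasure μ]
    (q : Measure α) [IsProbabilityMeasure q]
    (θ : ℕ → Ω → α) (hθmeas : ∀ i, Measurable (θ i))
    (hiid : iIndepFun θ μ)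
    (hlaw : ∀ i, μ.map (θ i) = q)
    (φ : α → ℝ) (hφ : Measurable φ) (C : ℝ) (hC : 1 ≤ C) (hbd : ∀ x, |φ x| ≤ C)
    (ε : ℝ) (hε : 0 < ε) :
    ∀ᵐ ω ∂μ, ∀ᶠ M : ℕ in atTop,
      ∑ i ∈ Finset.range M, φ (θ i ω) - M * ∫ x, φ x ∂q < (M:ℝ) ^ ((1:ℝ)/2 + ε) := by
  set m := ∫ x, φ x ∂q with hm_def
  set ψ : α → ℝ := fun x => φ x - m with hψ_def
  set B := 2 * C with hB_def
  have hC0 : (0:ℝ) < C := lt_of_lt_of_le one_pos hC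
  have hB0 : (0:ℝ) < B := by positivity
  have hm : |m| ≤ C := by
    have := norm_integral_le_of_norm_le_const (μ := q) (f := φ) (C := C)
      (Filter.Eventually.of_forall fun x => by simpa [Real.norm_eq_abs] using hbd x)
    simpa [Real.norm_eq_abs, measure_univ] using this
  have hψmeas : Measurable ψ := hφ.sub measurable_const
  have hψbd : ∀ x, |ψ x| ≤ B := by
    intro x
    have h1 := abs_le.1 (hbd x); have h2 := abs_le.1 hm
    rw [abs_le]; constructor <;> simp only [hψ_def, hB_def] <;> linarith [h1.1, h1.2, h2.1, h2.2]
  have hφint : Integrable φ q := my_int_bdd q hφ hbd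
  have hψ0 : ∫ x, ψ x ∂q = 0 := by
    simp only [hψ_def]
    rw [integral_sub hφint (integrable_const m), integral_const]
    simp [hm_def]
  set X : ℕ → Ω → ℝ := fun i ω => ψ (θ i ω) with hX_def
  have hXmeas : ∀ i, Measurable (X i) := fun i => hψmeas.comp (hθmeas i)
  have hXindep : iIndepFun X μ :=
    hiid.comp (fun _ => ψ) (fun _ => hψmeas)
  have hXbd : ∀ i ω, |X i ω| ≤ B := fun i ω => hψbd _
  have hXq : ∀ (i : ℕ) (t : ℝ),
      ∫ ω, Real.exp (t * X i ω) ∂μ = ∫ x, Real.exp (t * ψ x) ∂q := by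
    intro i t
    rw [← hlaw i]
    exact (integral_map (hθmeas i).aemeasurable
      (hψmeas.const_mul t).exp.aestronglyMeasurable).symm
  set s : ℕ → Set Ω :=
    fun M => {ω | (M:ℝ) ^ ((1:ℝ)/2 + ε) ≤ ∑ i ∈ Finset.range M, X i ω} with hs_def
  have key : ∀ M : ℕ, 1 ≤ M →
      μ (s M) ≤ ENNReal.ofReal (Real.exp (1 - (M:ℝ) ^ ε / B)) := by
    intro M hM
    have hMR : (0:ℝ) < M := by exact_mod_cast hM
    have hM1 : (1:ℝ) ≤ M := by exact_mod_cast hM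
    set t : ℝ := (M:ℝ) ^ (-(1:ℝ)/2) / B with ht_def
    have ht0 : 0 ≤ t := by positivity
    have htB : t * B ≤ 1 := by
      rw [ht_def, div_mul_cancel₀ _ (ne_of_gt hB0)]
      exact Real.rpow_le_one_of_one_le_of_nonpos hM1 (by norm_num)
    have hSbd : ∀ ω, |∑ i ∈ Finset.range M, X i ω| ≤ M * B := by
      intro ω
      calc |∑ i ∈ Finset.range M, X i ω| ≤ ∑ i ∈ Finset.range M, |X i ω| :=
            Finset.abs_sum_le_sum_abs _ _
        _ ≤ ∑ _i ∈ Finset.range M, B := Finset.sum_le_sum fun i _ => hXbd i ω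
        _ = M * B := by rw [Finset.sum_const, Finset.card_range, nsmul_eq_mul]
    have hSmeas : Measurable fun ω => ∑ i ∈ Finset.range M, X i ω :=
      Finset.measurable_sum _ fun i _ => hXmeas i
    have hint : Integrable (fun ω => Real.exp (t * ∑ i ∈ Finset.range M, X i ω)) μ := by
      refine my_int_bdd μ (hSmeas.const_mul t).exp (c := Real.exp (t * (M * B))) fun ω => ?_
      rw [abs_of_nonneg (Real.exp_nonneg _)]
      refine Real.exp_le_exp.2 (mul_le_mul_of_nonneg_left ?_ ht0)
      exact (le_abs_self _).trans (hSbd ω)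
    have cher := measure_ge_le_exp_mul_mgf (μ := μ)
      (X := fun ω => ∑ i ∈ Finset.range M, X i ω) ((M:ℝ) ^ ((1:ℝ)/2 + ε)) ht0 hint
    have hfuneq : (fun ω => ∑ i ∈ Finset.range M, X i ω) = ∑ i ∈ Finset.range M, X i := by
      funext ω; simp
    have hmgf : mgf (fun ω => ∑ i ∈ Finset.range M, X i ω) μ t
        = (∫ x, Real.exp (t * ψ x) ∂q) ^ M := by
      rw [hfuneq, hXindep.mgf_sum hXmeas (Finset.range M)]
      have : ∀ i ∈ Finset.range M, mgf (X i) μ t = ∫ x, Real.exp (t * ψ x) ∂q := by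
        intro i _; rw [mgf]; exact hXq i t
      rw [Finset.prod_congr rfl this, Finset.prod_const, Finset.card_range]
    have hsingle : ∫ x, Real.exp (t * ψ x) ∂q ≤ Real.exp (t ^ 2 * B ^ 2) :=
      my_mgf_le q ψ hψmeas B hB0 hψbd hψ0 t ht0 htB
    have hsingle0 : 0 ≤ ∫ x, Real.exp (t * ψ x) ∂q :=
      integral_nonneg fun x => Real.exp_nonneg _
    have hpow : (∫ x, Real.exp (t * ψ x) ∂q) ^ M ≤ Real.exp ((M:ℝ) * (t ^ 2 * B ^ 2)) := by
      calc (∫ x, Real.exp (t * ψ x) ∂q) ^ M ≤ (Real.exp (t ^ 2 * B ^ 2)) ^ M :=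
            pow_le_pow_left₀ hsingle0 hsingle M
        _ = Real.exp ((M:ℝ) * (t ^ 2 * B ^ 2)) := by rw [← Real.exp_nat_mul]
    have hE1 : (M:ℝ) * (t ^ 2 * B ^ 2) = 1 := by
      have hsq : ((M:ℝ) ^ (-(1:ℝ)/2)) ^ 2 = (M:ℝ)⁻¹ := by
        rw [← Real.rpow_natCast ((M:ℝ) ^ (-(1:ℝ)/2)) 2, ← Real.rpow_mul hMR.le]
        norm_num [Real.rpow_neg_one]
      rw [ht_def, div_pow, hsq]
      field_simp
    have hE2 : t * (M:ℝ) ^ ((1:ℝ)/2 + ε) = (M:ℝ) ^ ε / B := by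
      rw [ht_def, div_mul_eq_mul_div, ← Real.rpow_add hMR]
      norm_num
    have hfinal : (μ (s M)).toReal ≤ Real.exp (1 - (M:ℝ) ^ ε / B) := by
      calc (μ (s M)).toReal ≤ Real.exp (-t * (M:ℝ) ^ ((1:ℝ)/2 + ε))
            * mgf (fun ω => ∑ i ∈ Finset.range M, X i ω) μ t := cher
        _ ≤ Real.exp (-t * (M:ℝ) ^ ((1:ℝ)/2 + ε)) * Real.exp ((M:ℝ) * (t ^ 2 * B ^ 2)) := by
            refine mul_le_mul_of_nonneg_left ?_ (Real.exp_nonneg _)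
            rw [mgf] at hmgf ⊢
            rw [hmgf]; exact hpow
        _ = Real.exp (1 - (M:ℝ) ^ ε / B) := by
            rw [← Real.exp_add, hE1, neg_mul, hE2]; ring_nf
    exact (ENNReal.le_ofReal_iff_toReal_le (measure_ne_top μ _) (Real.exp_nonneg _)).2 hfinal
  have hbndsum : Summable fun M : ℕ => Real.exp (1 - (((M:ℕ):ℝ) + 1) ^ ε / B) := by
    set n : ℕ := ⌈2 / ε⌉₊ with hn_def
    have hnε : 2 ≤ (n:ℝ) * ε := by
      have h1 : 2 / ε ≤ (n:ℝ) := Nat.le_ceil _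
      calc (2:ℝ) = 2 / ε * ε := by field_simp
        _ ≤ (n:ℝ) * ε := mul_le_mul_of_nonneg_right h1 hε.le
    set c : ℝ := (n.factorial : ℝ) * B ^ n * Real.exp 1 with hc_def
    have hkey : ∀ M : ℕ, Real.exp (1 - (((M:ℕ):ℝ) + 1) ^ ε / B)
        ≤ c * (1 / ((M:ℝ) + 1) ^ 2) := by
      intro M
      set y : ℝ := (M:ℝ) + 1 with hy_def
      have hy1 : (1:ℝ) ≤ y := by
        have : (0:ℝ) ≤ (M:ℝ) := Nat.cast_nonneg M
        simp only [hy_def]; linarith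
      have hy0 : (0:ℝ) < y := lt_of_lt_of_le one_pos hy1
      set x : ℝ := y ^ ε / B with hx_def
      have hx0 : 0 < x := by positivity
      have hxn : y ^ (2:ℝ) / B ^ n ≤ x ^ n := by
        rw [hx_def, div_pow, ← Real.rpow_natCast (y ^ ε) n, ← Real.rpow_mul hy0.le]
        have h2 : y ^ (2:ℝ) ≤ y ^ (ε * (n:ℝ)) :=
          Real.rpow_le_rpow_of_exponent_le hy1 (by rw [mul_comm]; exact hnε)
        have h3 := mul_le_mul_of_nonneg_right h2
          (by positivity : (0:ℝ) ≤ ((B:ℝ) ^ n)⁻¹)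
        simpa [div_eq_mul_inv] using h3
      have hexpx : x ^ n / (n.factorial : ℝ) ≤ Real.exp x :=
        Real.pow_div_factorial_le_exp x hx0.le n
      have hexpneg : Real.exp (-x) ≤ (n.factorial : ℝ) / x ^ n := by
        have h1 : x ^ n ≤ Real.exp x * (n.factorial : ℝ) :=
          (div_le_iff₀ (by positivity)).1 hexpx
        rw [Real.exp_neg, inv_eq_one_div, div_le_div_iff₀ (Real.exp_pos x) (by positivity),
          one_mul]
        linarith
      calc Real.exp (1 - x) = Real.exp 1 * Real.exp (-x) := by
            rw [← Real.exp_add]; ring_nf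
        _ ≤ Real.exp 1 * ((n.factorial : ℝ) / x ^ n) :=
            mul_le_mul_of_nonneg_left hexpneg (Real.exp_nonneg 1)
        _ ≤ Real.exp 1 * ((n.factorial : ℝ) / (y ^ (2:ℝ) / B ^ n)) := by
            refine mul_le_mul_of_nonneg_left ?_ (Real.exp_nonneg 1)
            have hy2 : (0:ℝ) < y ^ (2:ℝ) / B ^ n := by positivity
            exact div_le_div_of_nonneg_left (by positivity) hy2 hxn
        _ = c * (1 / y ^ 2) := by
            rw [hc_def, ← Real.rpow_natCast y 2]
            push_cast
            field_simp
    have hsum2 : Summable fun M : ℕ => c * (1 / ((M:ℝ) + 1) ^ 2) := by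
      have h0 : Summable fun M : ℕ => 1 / ((M:ℝ)) ^ 2 :=
        (Real.summable_one_div_nat_rpow.2 (by norm_num : (1:ℝ) < 2)).congr
          (fun M => by rw [show ((2:ℝ)) = ((2:ℕ):ℝ) by norm_num, Real.rpow_natCast])
      have h1 : Summable fun M : ℕ => 1 / (((M:ℕ) + 1 : ℝ)) ^ 2 := by
        have := (summable_nat_add_iff (f := fun M : ℕ => 1 / ((M:ℝ)) ^ 2) 1).2 h0
        refine this.congr fun M => by push_cast; ring_nf
      exact h1.mul_left c
    refine Summable.of_nonneg_of_le (fun M => Real.exp_nonneg _) (fun M => ?_) hsum2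
    exact hkey M
  have htsum : (∑' M : ℕ, μ (s (M + 1))) ≠ ⊤ := by
    have hle : ∀ M : ℕ, μ (s (M + 1))
        ≤ ENNReal.ofReal (Real.exp (1 - (((M:ℕ):ℝ) + 1) ^ ε / B)) := by
      intro M
      have := key (M + 1) (Nat.le_add_left 1 M)
      simpa [Nat.cast_add, Nat.cast_one] using this
    refine ne_top_of_le_ne_top ?_ (ENNReal.tsum_le_tsum hle)
    rw [← ENNReal.ofReal_tsum_of_nonneg (fun M => Real.exp_nonneg _) hbndsum]
    exact ENNReal.ofReal_ne_top
  filter_upwards [MeasureTheory.ae_eventually_notMem htsum] with ω hω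
  rw [Filter.eventually_atTop] at hω ⊢
  obtain ⟨N, hN⟩ := hω
  refine ⟨N + 1, fun M hM => ?_⟩
  have hnot := hN (M - 1) (by omega)
  rw [Nat.sub_add_cancel (by omega : 1 ≤ M)] at hnot
  simp only [hs_def, Set.mem_setOf_eq, not_le] at hnot
  have hsum_eq : ∑ i ∈ Finset.range M, X i ω
      = ∑ i ∈ Finset.range M, φ (θ i ω) - M * m := by
    simp only [hX_def, hψ_def]
    rw [Finset.sum_sub_distrib, Finset.sum_const, Finset.card_range, nsmul_eq_mul]
  rw [hsum_eq] at hnot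
  exact hnot

lemma my_avg_rate {α Ω : Type} [MeasurableSpace α] [MeasurableSpace Ω]
    (μ : Measure Ω) [IsProbabilityMeasure μ]
    (q : Measure α) [IsProbabilityMeasure q]
    (θ : ℕ → Ω → α) (hθmeas : ∀ i, Measurable (θ i))
    (hiid : iIndepFun θ μ)
    (hlaw : ∀ i, μ.map (θ i) = q)
    (φ : α → ℝ) (hφ : Measurable φ) (C : ℝ) (hC : 1 ≤ C) (hbd : ∀ x, |φ x| ≤ C)
    (ε : ℝ) (hε : 0 < ε) :
    ∀ᵐ ω ∂μ, ∀ᶠ M : ℕ in atTop,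
      |(∑ i ∈ Finset.range M, φ (θ i ω)) / M - ∫ x, φ x ∂q|
        ≤ 1 / (M:ℝ) ^ ((1:ℝ)/2 - ε) := by
  have h1 := my_onesided μ q θ hθmeas hiid hlaw φ hφ C hC hbd ε hε
  have h2 := my_onesided μ q θ hθmeas hiid hlaw (fun x => -φ x) hφ.neg C hC
    (fun x => by simpa using hbd x) ε hε
  filter_upwards [h1, h2] with ω e1 e2
  filter_upwards [e1, e2, Filter.eventually_ge_atTop 1] with M hM1 hM2 hMge
  have hMR : (0:ℝ) < M := by exact_mod_cast hMge
  set m := ∫ x, φ x ∂q with hm_def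
  have hm2 : ∫ x, -φ x ∂q = -m := by rw [integral_neg]
  rw [hm2] at hM2
  have hM2' : -(∑ i ∈ Finset.range M, φ (θ i ω) - M * m) < (M:ℝ) ^ ((1:ℝ)/2 + ε) := by
    have : ∑ i ∈ Finset.range M, -φ (θ i ω) - (M:ℝ) * -m
        = -(∑ i ∈ Finset.range M, φ (θ i ω) - M * m) := by
      rw [Finset.sum_neg_distrib]; ring
    rwa [this] at hM2
  have habs : |∑ i ∈ Finset.range M, φ (θ i ω) - M * m| ≤ (M:ℝ) ^ ((1:ℝ)/2 + ε) := by
    rw [abs_le]; constructor <;> linarith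
  have hdiv : |(∑ i ∈ Finset.range M, φ (θ i ω)) / M - m|
      = |∑ i ∈ Finset.range M, φ (θ i ω) - M * m| / M := by
    rw [← abs_of_pos hMR, ← abs_div]
    congr 1
    field_simp
    rw [abs_of_pos hMR]; ring
  rw [hdiv]
  have hexp : (M:ℝ) ^ ((1:ℝ)/2 + ε) / M = 1 / (M:ℝ) ^ ((1:ℝ)/2 - ε) := by
    calc (M:ℝ) ^ ((1:ℝ)/2 + ε) / M = (M:ℝ) ^ ((1:ℝ)/2 + ε) / (M:ℝ) ^ (1:ℝ) := by
          rw [Real.rpow_one]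
      _ = (M:ℝ) ^ ((1:ℝ)/2 + ε - 1) := (Real.rpow_sub hMR _ _).symm
      _ = (M:ℝ) ^ (-((1:ℝ)/2 - ε)) := by ring_nf
      _ = 1 / (M:ℝ) ^ ((1:ℝ)/2 - ε) := by
          rw [Real.rpow_neg hMR.le, one_div]
          norm_num
  calc |∑ i ∈ Finset.range M, φ (θ i ω) - M * m| / M
      ≤ (M:ℝ) ^ ((1:ℝ)/2 + ε) / M := (div_le_div_iff_of_pos_right hMR).2 habs
    _ = 1 / (M:ℝ) ^ ((1:ℝ)/2 - ε) := hexp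

lemma my_ratio_bound (a F A B x y p r : ℝ) (ha : 0 < a) (hF : 0 ≤ F)
    (hy : a⁻¹ ≤ y) (hB1 : a⁻¹ ≤ B) (hB2 : B ≤ a) (hA : |A| ≤ F * B)
    (hx : |x - A| ≤ p) (hr : |y - B| ≤ r) :
    |x / y - A / B| ≤ a ^ 3 * (p + F * r) := by
  have hy0 : 0 < y := lt_of_lt_of_le (inv_pos.2 ha) hy
  have hB0 : 0 < B := lt_of_lt_of_le (inv_pos.2 ha) hB1
  have hp0 : 0 ≤ p := le_trans (abs_nonneg _) hx
  have hr0 : 0 ≤ r := le_trans (abs_nonneg _) hr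
  have key : x / y - A / B = (B * (x - A) + A * (B - y)) / (y * B) := by
    field_simp; ring
  rw [key, abs_div, abs_of_pos (mul_pos hy0 hB0)]
  have h1 : |B * (x - A) + A * (B - y)| ≤ B * p + F * B * r := by
    calc |B * (x - A) + A * (B - y)| ≤ |B * (x - A)| + |A * (B - y)| := abs_add_le _ _
      _ = B * |x - A| + |A| * |B - y| := by rw [abs_mul, abs_mul, abs_of_pos hB0]
      _ ≤ B * p + F * B * r := by
          refine add_le_add (mul_le_mul_of_nonneg_left hx hB0.le) ?_
          rw [abs_sub_comm]
          exact mul_le_mul hA hr (abs_nonneg _) (by positivity)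
  have hyB : a⁻¹ * a⁻¹ ≤ y * B := mul_le_mul hy hB1 (inv_pos.2 ha).le hy0.le
  calc |B * (x - A) + A * (B - y)| / (y * B)
      ≤ (B * p + F * B * r) / (y * B) :=
        (div_le_div_iff_of_pos_right (mul_pos hy0 hB0)).2 h1
    _ ≤ (B * p + F * B * r) / (a⁻¹ * a⁻¹) := by
        refine div_le_div_of_nonneg_left (by positivity) (by positivity) hyB
    _ ≤ a ^ 3 * (p + F * r) := by
        rw [← mul_inv, div_eq_mul_inv, inv_inv]
        nlinarith [mul_nonneg hp0 (mul_pos ha ha).le, mul_nonneg (mul_nonneg hF hr0) (mul_pos ha ha).le,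
          mul_nonneg hp0 ha.le, mul_nonneg hF hr0]

/-- self-normalized importance sampling with approximate weights
`g^J` (computed e.g. by a particle filter, `J = J(M) ≥ M`) retains the Monte
Carlo rate: `|(f, π^{M,J}) - (f,π)| ≤ W_{f,g,ε} / M^(1/2-ε)` a.s., where
`(f,π) = (fg,q)/(g,q)`; in particular a.s. convergence holds. -/
theorem stmt4 {α Ω : Type} [MeasurableSpace α] [MeasurableSpace Ω]
    (μ : Measure Ω) [IsProbabilityMeasure μ]
    (q : Measure α) [IsProbabilityMeasure q]
    (a : ℝ) (ha : 0 < a)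
    (g : α → ℝ) (hgmeas : Measurable g)
    (hg : ∀ x, a⁻¹ ≤ g x ∧ g x ≤ a)
    (θ : ℕ → Ω → α) (hθmeas : ∀ i, Measurable (θ i))
    (hiid : iIndepFun θ μ)
    (hlaw : ∀ i, μ.map (θ i) = q)
    (J : ℕ → ℕ) (hJ : ∀ M, M ≤ J M)
    (gJ : ℕ → Ω → α → ℝ)
    (hgJbnd : ∀ J' ω x, a⁻¹ ≤ gJ J' ω x ∧ gJ J' ω x ≤ a)
    (ε : ℝ) (hε1 : 0 < ε) (hε2 : ε < 1 / 2)
    (W : Ω → ℝ) (hW : ∀ ω, 0 ≤ W ω)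
    (happrox : ∀ᵐ ω ∂μ, ∀ J' : ℕ, 1 ≤ J' → ∀ x,
      |g x - gJ J' ω x| ≤ W ω / (J' : ℝ) ^ ((1 : ℝ) / 2 - ε))
    (f : α → ℝ) (hfmeas : Measurable f) (F : ℝ) (hf : ∀ x, |f x| ≤ F) :
    ∃ Wf : Ω → ℝ, (∀ ω, 0 ≤ Wf ω) ∧
      (∀ᵐ ω ∂μ, ∀ M : ℕ, 1 ≤ M →
        |(∑ i ∈ Finset.range M, f (θ i ω) * gJ (J M) ω (θ i ω)) /
            (∑ i ∈ Finset.range M, gJ (J M) ω (θ i ω)) -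
          (∫ x, f x * g x ∂q) / (∫ x, g x ∂q)|
          ≤ Wf ω / (M : ℝ) ^ ((1 : ℝ) / 2 - ε)) ∧
      (∀ᵐ ω ∂μ, Tendsto (fun M : ℕ =>
          (∑ i ∈ Finset.range M, f (θ i ω) * gJ (J M) ω (θ i ω)) /
            (∑ i ∈ Finset.range M, gJ (J M) ω (θ i ω)))
        atTop (nhds ((∫ x, f x * g x ∂q) / (∫ x, g x ∂q)))) := by
  -- basic positivity facts
  have hα : Nonempty α := by
    by_contra h
    rw [not_nonempty_iff] at h
    have h1 : q Set.univ = 1 := measure_univ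
    rw [Set.univ_eq_empty_iff.2 h] at h1
    simp at h1
  have hF : 0 ≤ F := le_trans (abs_nonneg _) (hf (Classical.arbitrary α))
  have ha1 : 1 ≤ a := by
    have h := hg (Classical.arbitrary α)
    have hle : a⁻¹ ≤ a := le_trans h.1 h.2
    have h2 : 1 ≤ a * a := by
      have := mul_le_mul_of_nonneg_right hle ha.le
      rwa [inv_mul_cancel₀ (ne_of_gt ha)] at this
    nlinarith
  have hainv : (0:ℝ) < a⁻¹ := inv_pos.2 ha
  have hgabs : ∀ x, |g x| ≤ a := fun x =>
    abs_le.2 ⟨by linarith [(hg x).1, hainv], (hg x).2⟩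
  have hfgabs : ∀ x, |f x * g x| ≤ F * a + 1 := fun x => by
    rw [abs_mul]
    nlinarith [hf x, hgabs x, abs_nonneg (f x), abs_nonneg (g x)]
  set A : ℝ := ∫ x, f x * g x ∂q with hA_def
  set Bq : ℝ := ∫ x, g x ∂q with hB_def
  have hgint : Integrable g q := my_int_bdd q hgmeas hgabs
  have hfgint : Integrable (fun x => f x * g x) q :=
    my_int_bdd q (hfmeas.mul hgmeas) hfgabs
  have hBa1 : a⁻¹ ≤ Bq := by
    rw [hB_def]
    calc a⁻¹ = ∫ _x, a⁻¹ ∂q := by simp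
      _ ≤ ∫ x, g x ∂q := integral_mono (integrable_const _) hgint fun x => (hg x).1
  have hBa2 : Bq ≤ a := by
    rw [hB_def]
    calc ∫ x, g x ∂q ≤ ∫ _x, a ∂q := integral_mono hgint (integrable_const _) fun x => (hg x).2
      _ = a := by simp
  have hB0 : 0 < Bq := lt_of_lt_of_le hainv hBa1
  have hAbs : |A| ≤ F * Bq := by
    rw [hA_def]
    calc |∫ x, f x * g x ∂q| ≤ ∫ x, |f x * g x| ∂q := by
          have := norm_integral_le_integral_norm (μ := q) (f := fun x => f x * g x)
          simp only [Real.norm_eq_abs] at this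
          exact this
      _ ≤ ∫ x, F * g x ∂q := by
          refine integral_mono hfgint.abs (hgint.const_mul F) fun x => ?_
          rw [abs_mul]
          calc |f x| * |g x| ≤ F * |g x| := mul_le_mul_of_nonneg_right (hf x) (abs_nonneg _)
            _ = F * g x := by rw [abs_of_pos (lt_of_lt_of_le hainv (hg x).1)]
      _ = F * Bq := by rw [integral_const_mul]
  have hr1 := my_avg_rate μ q θ hθmeas hiid hlaw (fun x => f x * g x)
    (hfmeas.mul hgmeas) (F * a + 1) (by nlinarith) hfgabs ε hε1
  have hr2 := my_avg_rate μ q θ hθmeas hiid hlaw g hgmeas a ha1 hgabs ε hε1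
  set p' : ℝ := (1:ℝ)/2 - ε with hp'_def
  have hp'0 : 0 < p' := by rw [hp'_def]; linarith
  have hp'1 : p' ≤ 1 := by rw [hp'_def]; linarith
  set u : Ω → ℕ → ℝ := fun ω M =>
    (∑ i ∈ Finset.range M, f (θ i ω) * gJ (J M) ω (θ i ω)) /
      (∑ i ∈ Finset.range M, gJ (J M) ω (θ i ω)) with hu_def
  set L : ℝ := A / Bq with hL_def
  set Wf : Ω → ℝ := fun ω => max 0 (⨆ M : ℕ, (M:ℝ) ^ p' * |u ω M - L|) with hWf_def
  have hWf0 : ∀ ω, 0 ≤ Wf ω := fun ω => le_max_left 0 _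
  -- global bound |u ω M - L| ≤ 2 F + 2
  have huabs : ∀ ω M, |u ω M| ≤ F := by
    intro ω M
    rcases Nat.eq_zero_or_pos M with h0 | hMpos
    · simp [hu_def, h0, hF]
    · set NJ := ∑ i ∈ Finset.range M, f (θ i ω) * gJ (J M) ω (θ i ω) with hNJ
      set DJ := ∑ i ∈ Finset.range M, gJ (J M) ω (θ i ω) with hDJ
      have hDJpos : 0 < DJ := by
        rw [hDJ]
        refine Finset.sum_pos (fun i _ => lt_of_lt_of_le hainv (hgJbnd _ ω _).1) ?_
        exact Finset.nonempty_range_iff.2 (Nat.pos_iff_ne_zero.1 hMpos)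
      have hNbd : |NJ| ≤ F * DJ := by
        rw [hNJ, hDJ, Finset.mul_sum]
        refine (Finset.abs_sum_le_sum_abs _ _).trans (Finset.sum_le_sum fun i _ => ?_)
        rw [abs_mul]
        calc |f (θ i ω)| * |gJ (J M) ω (θ i ω)| ≤ F * |gJ (J M) ω (θ i ω)| :=
              mul_le_mul_of_nonneg_right (hf _) (abs_nonneg _)
          _ = F * gJ (J M) ω (θ i ω) := by
              rw [abs_of_pos (lt_of_lt_of_le hainv (hgJbnd _ ω _).1)]
      rw [hu_def]
      simp only []
      rw [abs_div, abs_of_pos hDJpos, div_le_iff₀ hDJpos]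
      exact hNbd
  have hLabs : |L| ≤ F := by
    rw [hL_def, abs_div, abs_of_pos hB0, div_le_iff₀ hB0]
    exact hAbs
  have huL : ∀ ω M, |u ω M - L| ≤ 2 * F := fun ω M => by
    have := abs_sub (u ω M) L
    calc |u ω M - L| ≤ |u ω M| + |L| := abs_sub _ _
      _ ≤ 2 * F := by linarith [huabs ω M, hLabs]
  have hbound : ∀ᵐ ω ∂μ, ∀ M : ℕ, 1 ≤ M → |u ω M - L| ≤ Wf ω / (M:ℝ) ^ p' := by
    filter_upwards [hr1, hr2, happrox] with ω e1 e2 e3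
    rw [Filter.eventually_atTop] at e1 e2
    obtain ⟨N1, hN1⟩ := e1
    obtain ⟨N2, hN2⟩ := e2
    set N0 := max (max N1 N2) 1 with hN0_def
    set K : ℝ := a ^ 3 * ((F * W ω + 1) + F * (W ω + 1)) with hK_def
    have hK0 : 0 ≤ K := by
      have h1 := hW ω
      have h2 : (0:ℝ) < a ^ 3 := pow_pos ha 3
      have h3 : 0 ≤ F * W ω := mul_nonneg hF h1
      nlinarith
    have good : ∀ M : ℕ, N0 ≤ M → (M:ℝ) ^ p' * |u ω M - L| ≤ K := by
      intro M hM
      have hM1 : 1 ≤ M := le_trans (le_max_right _ 1) hM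
      have hMR : (0:ℝ) < M := by exact_mod_cast hM1
      have hMne : (M:ℝ) ≠ 0 := ne_of_gt hMR
      have hMp : (0:ℝ) < (M:ℝ) ^ p' := Real.rpow_pos_of_pos hMR _
      have hJM1 : 1 ≤ J M := le_trans hM1 (hJ M)
      have hJMR : (M:ℝ) ≤ (J M : ℝ) := by exact_mod_cast hJ M
      have hJp : (M:ℝ) ^ p' ≤ (J M : ℝ) ^ p' := Real.rpow_le_rpow hMR.le hJMR hp'0.le
      have happ' : ∀ x, |g x - gJ (J M) ω x| ≤ W ω / (M:ℝ) ^ p' := by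
        intro x
        refine (e3 (J M) hJM1 x).trans ?_
        exact div_le_div_of_nonneg_left (hW ω) hMp hJp
      set NJ := ∑ i ∈ Finset.range M, f (θ i ω) * gJ (J M) ω (θ i ω) with hNJ_def
      set DJ := ∑ i ∈ Finset.range M, gJ (J M) ω (θ i ω) with hDJ_def
      set Nn := ∑ i ∈ Finset.range M, f (θ i ω) * g (θ i ω) with hNn_def
      set Dn := ∑ i ∈ Finset.range M, g (θ i ω) with hDn_def
      have hNdiff : |NJ / M - Nn / M| ≤ F * W ω / (M:ℝ) ^ p' := by
        have h1 : |NJ - Nn| ≤ (M:ℝ) * (F * (W ω / (M:ℝ) ^ p')) := by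
          rw [hNJ_def, hNn_def, ← Finset.sum_sub_distrib]
          refine (Finset.abs_sum_le_sum_abs _ _).trans ?_
          have : ∀ i ∈ Finset.range M,
              |f (θ i ω) * gJ (J M) ω (θ i ω) - f (θ i ω) * g (θ i ω)|
                ≤ F * (W ω / (M:ℝ) ^ p') := by
            intro i _
            rw [← mul_sub, abs_mul]
            refine mul_le_mul (hf _) ?_ (abs_nonneg _) hF
            rw [abs_sub_comm]
            exact happ' _
          refine (Finset.sum_le_sum this).trans ?_
          rw [Finset.sum_const, Finset.card_range, nsmul_eq_mul]
        rw [div_sub_div_same, abs_div, abs_of_pos hMR, div_le_iff₀ hMR]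
        calc |NJ - Nn| ≤ (M:ℝ) * (F * (W ω / (M:ℝ) ^ p')) := h1
          _ = F * W ω / (M:ℝ) ^ p' * M := by ring
      have hDdiff : |DJ / M - Dn / M| ≤ W ω / (M:ℝ) ^ p' := by
        have h1 : |DJ - Dn| ≤ (M:ℝ) * (W ω / (M:ℝ) ^ p') := by
          rw [hDJ_def, hDn_def, ← Finset.sum_sub_distrib]
          refine (Finset.abs_sum_le_sum_abs _ _).trans ?_
          have : ∀ i ∈ Finset.range M,
              |gJ (J M) ω (θ i ω) - g (θ i ω)| ≤ W ω / (M:ℝ) ^ p' := by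
            intro i _
            rw [abs_sub_comm]
            exact happ' _
          refine (Finset.sum_le_sum this).trans ?_
          rw [Finset.sum_const, Finset.card_range, nsmul_eq_mul]
        rw [div_sub_div_same, abs_div, abs_of_pos hMR, div_le_iff₀ hMR]
        calc |DJ - Dn| ≤ (M:ℝ) * (W ω / (M:ℝ) ^ p') := h1
          _ = W ω / (M:ℝ) ^ p' * M := by ring
      have hn : |Nn / M - A| ≤ 1 / (M:ℝ) ^ p' :=
        hN1 M (le_trans (le_trans (le_max_left N1 N2) (le_max_left _ 1)) hM)
      have hd : |Dn / M - Bq| ≤ 1 / (M:ℝ) ^ p' :=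
        hN2 M (le_trans (le_trans (le_max_right N1 N2) (le_max_left _ 1)) hM)
      have hx : |NJ / M - A| ≤ (F * W ω + 1) / (M:ℝ) ^ p' := by
        calc |NJ / M - A| ≤ |NJ / M - Nn / M| + |Nn / M - A| := abs_sub_le _ _ _
          _ ≤ F * W ω / (M:ℝ) ^ p' + 1 / (M:ℝ) ^ p' := add_le_add hNdiff hn
          _ = (F * W ω + 1) / (M:ℝ) ^ p' := by rw [← add_div]
      have hy' : |DJ / M - Bq| ≤ (W ω + 1) / (M:ℝ) ^ p' := by
        calc |DJ / M - Bq| ≤ |DJ / M - Dn / M| + |Dn / M - Bq| := abs_sub_le _ _ _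
          _ ≤ W ω / (M:ℝ) ^ p' + 1 / (M:ℝ) ^ p' := add_le_add hDdiff hd
          _ = (W ω + 1) / (M:ℝ) ^ p' := by rw [← add_div]
      have hyb : a⁻¹ ≤ DJ / M := by
        rw [le_div_iff₀ hMR]
        calc a⁻¹ * M = (M:ℕ) • a⁻¹ := by rw [nsmul_eq_mul]; ring
          _ = ∑ _i ∈ Finset.range M, a⁻¹ := by rw [Finset.sum_const, Finset.card_range]
          _ ≤ DJ := Finset.sum_le_sum fun i _ => (hgJbnd _ ω _).1
      have hueq : u ω M = (NJ / M) / (DJ / M) := by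
        rw [div_div_div_cancel_right₀ hMne NJ DJ]
      have hrb := my_ratio_bound a F A Bq (NJ / M) (DJ / M)
        ((F * W ω + 1) / (M:ℝ) ^ p') ((W ω + 1) / (M:ℝ) ^ p')
        ha hF hyb hBa1 hBa2 hAbs hx hy'
      rw [hueq, hL_def]
      calc (M:ℝ) ^ p' * |NJ / M / (DJ / M) - A / Bq|
          ≤ (M:ℝ) ^ p' * (a ^ 3 * ((F * W ω + 1) / (M:ℝ) ^ p'
              + F * ((W ω + 1) / (M:ℝ) ^ p'))) :=
            mul_le_mul_of_nonneg_left hrb hMp.le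
        _ = K := by
            rw [hK_def]
            field_simp
    have hbdd : BddAbove (Set.range fun M : ℕ => (M:ℝ) ^ p' * |u ω M - L|) := by
      refine ⟨max K ((N0:ℝ) * (2 * F)), ?_⟩
      rintro x ⟨M, rfl⟩
      rcases le_or_gt N0 M with h | h
      · exact le_max_of_le_left (good M h)
      · rcases Nat.eq_zero_or_pos M with h0 | hMpos
        · refine le_max_of_le_left ?_
          simp only [h0, Nat.cast_zero]
          rw [Real.zero_rpow (ne_of_gt hp'0), zero_mul]
          exact hK0
        · have hM1R : (1:ℝ) ≤ M := by exact_mod_cast hMpos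
          have hMle : (M:ℝ) ^ p' ≤ (M:ℝ) := by
            calc (M:ℝ) ^ p' ≤ (M:ℝ) ^ (1:ℝ) := Real.rpow_le_rpow_of_exponent_le hM1R hp'1
              _ = M := Real.rpow_one _
          refine le_max_of_le_right ?_
          calc (M:ℝ) ^ p' * |u ω M - L| ≤ (M:ℝ) * (2 * F) :=
                mul_le_mul hMle (huL ω M) (abs_nonneg _) (by linarith)
            _ ≤ (N0:ℝ) * (2 * F) := by
                refine mul_le_mul_of_nonneg_right ?_ (by positivity)
                exact_mod_cast h.le
    intro M hM1
    have hMR : (0:ℝ) < M := by exact_mod_cast hM1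
    have hMp : (0:ℝ) < (M:ℝ) ^ p' := Real.rpow_pos_of_pos hMR _
    rw [le_div_iff₀ hMp]
    calc |u ω M - L| * (M:ℝ) ^ p' = (M:ℝ) ^ p' * |u ω M - L| := mul_comm _ _
      _ ≤ ⨆ M : ℕ, (M:ℝ) ^ p' * |u ω M - L| := le_ciSup hbdd M
      _ ≤ Wf ω := le_max_right _ _
  refine ⟨Wf, hWf0, ?_, ?_⟩
  · filter_upwards [hbound] with ω h M hM
    have := h M hM
    simp only [hu_def, hL_def, hA_def, hB_def, hp'_def] at this
    exact this
  · filter_upwards [hbound] with ω h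
    have htend : Tendsto (fun M : ℕ => u ω M) atTop (nhds L) := by
      rw [← tendsto_sub_nhds_zero_iff]
      refine squeeze_zero_norm' ?_
        (Tendsto.div_atTop (tendsto_const_nhds (x := Wf ω))
          ((tendsto_rpow_atTop hp'0).comp tendsto_natCast_atTop_atTop))
      filter_upwards [Filter.eventually_ge_atTop 1] with M hM
      simpa [Real.norm_eq_abs] using h M hM
    simp only [hu_def, hL_def, hA_def, hB_def] at htend
    exact htend
end

section
/- Let $\pi^{M,J}$ and $\bar{\pi}^{M,J}$ be the normalized importance sampling measures built on the same samples $\theta^{(1)}, \ldots, \theta^{(M)}$ from the approximate weights $g^J(\theta^{(i)})$ and their clipped versions $\varphi^M(g^J(\theta^{(i)}))$ respectively, where $a^{-1} \le g^J \le a$ and the clipping replaces the $M_T$ largest weights by the $M_T$-th largest. Then for every bounded $f$, the deterministic bound $|(f, \bar{\pi}^{M,J}) - (f, \pi^{M,J})| \le 2 a^2 \|f\|_\infty M_T / M$ holds. -/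
/-- The `k`-th largest value (1-based) among `v 0, …, v (M-1)`. -/
noncomputable def kthLargest {M : ℕ} (v : Fin M → ℝ) (k : ℕ) : ℝ :=
  (List.insertionSort (fun x y : ℝ => x ≥ y) (List.ofFn v)).getD (k - 1) 0

/-- the deterministic bound between the self-normalized estimators
built from weights `v i ∈ [a⁻¹, a]` and their clipped versions (clipping at the
`M_T`-th largest value): the discrepancy is at most `2 a² ‖f‖∞ M_T / M`. -/
theorem stmt6 (M : ℕ) (hM : 0 < M) (a : ℝ) (ha : 0 < a)
    (v : Fin M → ℝ) (hv : ∀ i, a⁻¹ ≤ v i ∧ v i ≤ a)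
    (MT : ℕ) (hMT1 : 1 ≤ MT) (hMT2 : MT ≤ M)
    (f : Fin M → ℝ) (F : ℝ) (hf : ∀ i, |f i| ≤ F) :
    |(∑ i, f i * min (v i) (kthLargest v MT)) /
        (∑ i, min (v i) (kthLargest v MT)) -
      (∑ i, f i * v i) / (∑ i, v i)|
      ≤ 2 * a ^ 2 * F * MT / M := by
  have hainv : (0:ℝ) < a⁻¹ := by positivity
  set c := kthLargest v MT with hc
  set l := List.insertionSort (fun x y : ℝ => x ≥ y) (List.ofFn v) with hl
  have hperm : l.Perm (List.ofFn v) := List.perm_insertionSort _ _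
  have hsorted : l.Pairwise (· ≥ ·) := List.pairwise_insertionSort _ _
  have hlen : l.length = M := by rw [hperm.length_eq, List.length_ofFn]
  have hlt : MT - 1 < l.length := by omega
  have hcget : c = l.get ⟨MT - 1, hlt⟩ := by
    rw [hc, kthLargest, ← hl]; exact List.getD_eq_getElem l 0 hlt
  have hcmem : c ∈ List.ofFn v := hperm.mem_iff.mp (hcget ▸ l.get_mem _)
  obtain ⟨j, hj⟩ := List.mem_ofFn.mp hcmem
  have hc1 : a⁻¹ ≤ c := hj ▸ (hv j).1
  have hc2 : c ≤ a := hj ▸ (hv j).2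
  -- elements of the drop are ≤ c
  have hdrop : ∀ x ∈ l.drop (MT - 1), x ≤ c := by
    intro x hx
    obtain ⟨k, hk, rfl⟩ := List.mem_iff_getElem.mp hx
    rw [List.getElem_drop]
    have hk' : MT - 1 + k < l.length := by
      rw [List.length_drop] at hk; omega
    have := hsorted.rel_get_of_le
      (show (⟨MT - 1, hlt⟩ : Fin l.length) ≤ ⟨MT - 1 + k, hk'⟩ from by
        simp [Fin.le_def])
    have h2 : c = l[MT - 1] := hcget
    rw [h2]
    simpa using this
  -- the clipping distortion function
  set φ : ℝ → ℝ := fun x => x - min x c with hφ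
  have hsum_eq : (∑ i, (v i - min (v i) c)) = (l.map φ).sum := by
    rw [(hperm.map φ).sum_eq, List.map_ofFn, List.sum_ofFn]
    rfl
  set D := ∑ i, (v i - min (v i) c) with hD
  have hDnn : 0 ≤ D := Finset.sum_nonneg fun i _ => by
    simp [min_le_left]
  have hDle : D ≤ a * MT := by
    rw [hsum_eq, ← List.take_append_drop (MT - 1) l, List.map_append,
      List.sum_append]
    have h1 : (List.map φ (l.take (MT - 1))).sum ≤ (MT - 1 : ℕ) * a := by
      have := List.sum_le_card_nsmul (List.map φ (l.take (MT - 1))) a ?_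
      · rw [List.length_map] at this
        calc (List.map φ (l.take (MT - 1))).sum ≤ (l.take (MT-1)).length • a := this
          _ ≤ (MT - 1 : ℕ) * a := by
              rw [nsmul_eq_mul]
              have : (l.take (MT - 1)).length ≤ MT - 1 := by
                simp [List.length_take]
              exact mul_le_mul_of_nonneg_right (by exact_mod_cast this) ha.le
      · intro x hx
        obtain ⟨y, hy, rfl⟩ := List.mem_map.mp hx
        have hy' : y ∈ l := List.mem_of_mem_take hy
        have hy2 : y ≤ a := by
          obtain ⟨i, hi⟩ := List.mem_ofFn.mp (hperm.mem_iff.mp hy')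
          exact hi ▸ (hv i).2
        have : a⁻¹ ≤ min y c := le_min (by
          obtain ⟨i, hi⟩ := List.mem_ofFn.mp (hperm.mem_iff.mp hy')
          exact hi ▸ (hv i).1) hc1
        have := hainv.le.trans this
        simp only [hφ]
        linarith
    have h2 : (List.map φ (l.drop (MT - 1))).sum = 0 := by
      apply List.sum_eq_zero
      intro x hx
      obtain ⟨y, hy, rfl⟩ := List.mem_map.mp hx
      have := hdrop y hy
      simp [hφ, min_eq_left this]
    rw [h2, add_zero]
    calc (List.map φ (l.take (MT - 1))).sum ≤ (MT - 1 : ℕ) * a := h1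
      _ ≤ a * MT := by
          have : ((MT - 1 : ℕ) : ℝ) ≤ MT := by
            exact_mod_cast Nat.cast_le.mpr (Nat.sub_le MT 1)
          nlinarith
  -- sums and bounds
  set B := ∑ i, min (v i) c with hB
  set B' := ∑ i, v i with hB'
  set A := ∑ i, f i * min (v i) c with hA
  set A' := ∑ i, f i * v i with hA'
  have hwlb : ∀ i : Fin M, a⁻¹ ≤ min (v i) c := fun i => le_min (hv i).1 hc1
  have hBlb : (M : ℝ) * a⁻¹ ≤ B := by
    rw [hB]
    calc (M:ℝ) * a⁻¹ = ∑ _i : Fin M, a⁻¹ := by simp [mul_comm]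
      _ ≤ _ := Finset.sum_le_sum fun i _ => hwlb i
  have hB'lb : (M : ℝ) * a⁻¹ ≤ B' := by
    rw [hB']
    calc (M:ℝ) * a⁻¹ = ∑ _i : Fin M, a⁻¹ := by simp [mul_comm]
      _ ≤ _ := Finset.sum_le_sum fun i _ => (hv i).1
  have hMpos : (0:ℝ) < M := by exact_mod_cast hM
  have hBpos : 0 < B := lt_of_lt_of_le (by positivity) hBlb
  have hB'pos : 0 < B' := lt_of_lt_of_le (by positivity) hB'lb
  have hF : 0 ≤ F := (abs_nonneg _).trans (hf ⟨0, hM⟩)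
  have hBB' : B' - B = D := by rw [hB', hB, hD, ← Finset.sum_sub_distrib]
  have hAA' : |A - A'| ≤ F * D := by
    rw [hA, hA', ← Finset.sum_sub_distrib]
    calc |∑ i, (f i * min (v i) c - f i * v i)| ≤ ∑ i, |f i * min (v i) c - f i * v i| :=
          Finset.abs_sum_le_sum_abs _ _
      _ ≤ ∑ i, F * (v i - min (v i) c) := by
          apply Finset.sum_le_sum
          intro i _
          rw [← mul_sub, abs_mul]
          have h1 : |min (v i) c - v i| = v i - min (v i) c := by
            rw [abs_sub_comm, abs_of_nonneg (by simp [min_le_left])]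
          rw [h1]
          exact mul_le_mul_of_nonneg_right (hf i) (by simp [min_le_left])
      _ = F * D := by rw [hD, Finset.mul_sum]
  have hA'bd : |A'| ≤ F * B' := by
    rw [hA', hB', Finset.mul_sum]
    calc |∑ i, f i * v i| ≤ ∑ i, |f i * v i| := Finset.abs_sum_le_sum_abs _ _
      _ ≤ ∑ i, F * v i := by
          apply Finset.sum_le_sum
          intro i _
          rw [abs_mul, abs_of_nonneg (hainv.le.trans (hv i).1)]
          exact mul_le_mul_of_nonneg_right (hf i) (hainv.le.trans (hv i).1)
  have hdecomp : A / B - A' / B' = (A - A') / B + A' * (B' - B) / (B * B') := by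
    field_simp
    ring
  rw [hdecomp]
  have key : |(A - A') / B + A' * (B' - B) / (B * B')| ≤ 2 * F * D / B := by
    calc |(A - A') / B + A' * (B' - B) / (B * B')|
        ≤ |(A - A') / B| + |A' * (B' - B) / (B * B')| := abs_add_le _ _
      _ = |A - A'| / B + |A'| * D / (B * B') := by
          rw [abs_div, abs_of_pos hBpos, abs_div, abs_mul, hBB',
            abs_of_nonneg hDnn, abs_of_pos (mul_pos hBpos hB'pos)]
      _ ≤ F * D / B + (F * B') * D / (B * B') := by
          gcongr
      _ = 2 * F * D / B := by
          field_simp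
          ring
  refine key.trans ?_
  have h1 : 2 * F * D / B ≤ 2 * F * (a * MT) / ((M:ℝ) * a⁻¹) := by
    apply div_le_div₀ (by positivity) (by nlinarith) (by positivity) hBlb
  refine h1.trans (le_of_eq ?_)
  field_simp
end

section
/- Let $u: \mathcal{X} \to \mathbb{R}$ be bounded with $\inf_x u(x) \ge a^{-1} > 0$, and let $\xi$ and $\xi^J$ be probability measures on $\mathcal{X}$ with $|(f, \xi^J) - (f, \xi)| \le \delta \|f\|_\infty$ for all bounded $f$ and some $\delta \ge 0$. Then the Bayes-updated measures $u \star \xi$ and $u \star \xi^J$, defined by $(f, u\star\xi) = (fu,\xi)/(u,\xi)$, satisfy for every bounded $f$: $|(f, u \star \xi^J) - (f, u \star \xi)| \le 2 a \|u\|_\infty \|f\|_\infty \delta$. -/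
open MeasureTheory

lemma stmt18_key (A AJ B BJ a Bu F δ : ℝ) (ha : 0 < a)
    (hB : a⁻¹ ≤ B) (hBJ : a⁻¹ ≤ BJ)
    (hAJ : |AJ| ≤ F * BJ)
    (hdA : |AJ - A| ≤ δ * (F * Bu))
    (hdB : |BJ - B| ≤ δ * Bu)
    (hF : 0 ≤ F) :
    |AJ / BJ - A / B| ≤ 2 * a * Bu * F * δ := by
  have hB0 : 0 < B := lt_of_lt_of_le (inv_pos.mpr ha) hB
  have hBJ0 : 0 < BJ := lt_of_lt_of_le (inv_pos.mpr ha) hBJ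
  have haB : 1 ≤ a * B := by
    calc (1:ℝ) = a * a⁻¹ := by field_simp
    _ ≤ a * B := by nlinarith
  have heq : AJ / BJ - A / B = (AJ - A) / B + (AJ / BJ) * ((B - BJ) / B) := by
    field_simp; ring
  rw [heq]
  have h1 : |(AJ - A) / B| ≤ δ * (F * Bu) * a := by
    rw [abs_div, abs_of_pos hB0, div_le_iff₀ hB0]
    have h0 : 0 ≤ δ * (F * Bu) := le_trans (abs_nonneg _) hdA
    nlinarith
  have h2 : |AJ / BJ * ((B - BJ) / B)| ≤ F * (δ * Bu * a) := by
    rw [abs_mul]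
    have hq : |AJ / BJ| ≤ F := by
      rw [abs_div, abs_of_pos hBJ0, div_le_iff₀ hBJ0]; linarith
    have hr : |(B - BJ) / B| ≤ δ * Bu * a := by
      rw [abs_div, abs_of_pos hB0, div_le_iff₀ hB0]
      have h0 : 0 ≤ δ * Bu := le_trans (abs_nonneg _) hdB
      have : |B - BJ| = |BJ - B| := abs_sub_comm _ _
      nlinarith
    exact mul_le_mul hq hr (abs_nonneg _) hF
  calc |(AJ - A) / B + AJ / BJ * ((B - BJ) / B)|
      ≤ |(AJ - A) / B| + |AJ / BJ * ((B - BJ) / B)| := abs_add_le _ _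
    _ ≤ δ * (F * Bu) * a + F * (δ * Bu * a) := add_le_add h1 h2
    _ = 2 * a * Bu * F * δ := by ring

/-- propagation of an integral error bound through the Bayes
update `ξ ↦ u ⋆ ξ`: if `|(f,ξ^J) - (f,ξ)| ≤ δ ‖f‖∞` for all bounded `f` and
`a⁻¹ ≤ u ≤ Bu`, then `|(f, u⋆ξ^J) - (f, u⋆ξ)| ≤ 2 a Bu ‖f‖∞ δ`. -/
theorem stmt18 {X : Type} [MeasurableSpace X]
    (ξ ξJ : Measure X) [IsProbabilityMeasure ξ] [IsProbabilityMeasure ξJ]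
    (u : X → ℝ) (humeas : Measurable u)
    (a : ℝ) (ha : 0 < a) (hlow : ∀ x, a⁻¹ ≤ u x)
    (Bu : ℝ) (hub : ∀ x, |u x| ≤ Bu)
    (δ : ℝ) (hδ : 0 ≤ δ)
    (herr : ∀ f : X → ℝ, Measurable f → ∀ F : ℝ, (∀ x, |f x| ≤ F) →
      |(∫ x, f x ∂ξJ) - ∫ x, f x ∂ξ| ≤ δ * F) :
    ∀ f : X → ℝ, Measurable f → ∀ F : ℝ, (∀ x, |f x| ≤ F) →
      |(∫ x, f x * u x ∂ξJ) / (∫ x, u x ∂ξJ)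
        - (∫ x, f x * u x ∂ξ) / (∫ x, u x ∂ξ)|
        ≤ 2 * a * Bu * F * δ := by
  intro f hfmeas F hf
  have hne : Nonempty X := by
    by_contra h
    have h0 : ξ Set.univ = 0 := by
      simp [Set.univ_eq_empty_iff.mpr (not_nonempty_iff.mp h)]
    simp [measure_univ] at h0
  have hF : 0 ≤ F := le_trans (abs_nonneg _) (hf (Classical.arbitrary X))
  have hBu : 0 ≤ Bu := le_trans (abs_nonneg _) (hub (Classical.arbitrary X))
  have hu_int : ∀ (μ : Measure X) [IsProbabilityMeasure μ], Integrable u μ := by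
    intro μ _
    exact (integrable_const Bu).mono' humeas.aestronglyMeasurable
      (Filter.Eventually.of_forall fun x => by simpa using hub x)
  have hfu_int : ∀ (μ : Measure X) [IsProbabilityMeasure μ],
      Integrable (fun x => f x * u x) μ := by
    intro μ _
    refine (integrable_const (F * Bu)).mono'
      (hfmeas.mul humeas).aestronglyMeasurable
      (Filter.Eventually.of_forall fun x => ?_)
    simp only [norm_mul, Real.norm_eq_abs]
    exact mul_le_mul (hf x) (hub x) (abs_nonneg _) hF
  have hB : ∀ (μ : Measure X) [IsProbabilityMeasure μ], a⁻¹ ≤ ∫ x, u x ∂μ := by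
    intro μ _
    have := integral_mono (integrable_const a⁻¹) (hu_int μ) hlow
    simpa using this
  have hAJ : |∫ x, f x * u x ∂ξJ| ≤ F * ∫ x, u x ∂ξJ := by
    calc |∫ x, f x * u x ∂ξJ| ≤ ∫ x, |f x| * |u x| ∂ξJ := by simpa [Real.norm_eq_abs, abs_mul] using norm_integral_le_integral_norm (μ := ξJ) (fun x => f x * u x)
      _ ≤ ∫ x, F * u x ∂ξJ := by
          refine integral_mono (by simpa [abs_mul] using (hfu_int ξJ).abs) ((hu_int ξJ).const_mul F) fun x => ?_
          rw [abs_of_pos (lt_of_lt_of_le (inv_pos.mpr ha) (hlow x))]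
          exact mul_le_mul_of_nonneg_right (hf x)
            (le_trans (le_of_lt (inv_pos.mpr ha)) (hlow x))
      _ = F * ∫ x, u x ∂ξJ := integral_const_mul F u
  have hdA : |(∫ x, f x * u x ∂ξJ) - ∫ x, f x * u x ∂ξ| ≤ δ * (F * Bu) := by
    refine herr _ (hfmeas.mul humeas) (F * Bu) fun x => ?_
    rw [Pi.mul_apply, abs_mul]
    exact mul_le_mul (hf x) (hub x) (abs_nonneg _) hF
  have hdB : |(∫ x, u x ∂ξJ) - ∫ x, u x ∂ξ| ≤ δ * Bu := herr u humeas Bu hub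
  exact stmt18_key _ _ _ _ _ _ _ _ ha (hB ξ) (hB ξJ) hAJ hdA hdB hF
end
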